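/- arXiv:1612.06328 — 3 statements merged into one kernel-verified Lean document; each statement's English description precedes it below -/
import Mathlib

section
/- Let s and k be positive integers with k ≤ s, and let m₁,…,m_k be integers whose sum is not divisible by s. Define T_{j₁,…,j_k} = ∏_{p=1}^{k} c_{m_p} e^{2πi m_p j_p / s} for fixed complex constants c_{m_p}. Then the sum of T_{j₁,…,j_k} over all k-tuples (j₁,…,j_k) of pairwise distinct elements of ℤ/sℤ equals 0. -/
lemma exp_period_aux (s : ℕ) (hs : (s : ℂ) ≠ 0) (m : ℤ) (a : ℕ) :
    Complex.exp (2 * Real.pi * Complex.I * m * (((a + 1) % s : ℕ) : ℂ) / s)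
    = Complex.exp (2 * Real.pi * Complex.I * m / s) *
      Complex.exp (2 * Real.pi * Complex.I * m * (a : ℂ) / s) := by
  have h1 : ((a + 1) % s + s * ((a + 1) / s) : ℕ) = a + 1 := Nat.mod_add_div _ _
  have h2 : (((a + 1) % s : ℕ) : ℂ) = (a : ℂ) + 1 - (s : ℂ) * (((a + 1) / s : ℕ) : ℂ) := by
    have := congrArg (fun n : ℕ => (n : ℂ)) h1
    push_cast at this
    linear_combination this
  rw [h2]
  obtain ⟨q, hq⟩ : ∃ q : ℤ, (((a + 1) / s : ℕ) : ℂ) = (q : ℂ) ∧ True := ⟨((a + 1) / s : ℕ), by norm_cast, trivial⟩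
  obtain ⟨hq, -⟩ := hq
  rw [hq]
  have h3 : 2 * (Real.pi : ℂ) * Complex.I * m *
        ((a : ℂ) + 1 - (s : ℂ) * (q : ℂ)) / s
      = (2 * Real.pi * Complex.I * m / s + 2 * Real.pi * Complex.I * m * (a : ℂ) / s)
        + ((-(m * q) : ℤ) : ℂ) * (2 * Real.pi * Complex.I) := by
    push_cast
    field_simp
    ring
  rw [h3, Complex.exp_add, Complex.exp_add, Complex.exp_int_mul_two_pi_mul_I, mul_one]

open scoped Classical in
theorem stmt1 (s k : ℕ) (hk1 : 1 ≤ k) (hks : k ≤ s)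
    (m : Fin k → ℤ) (c : Fin k → ℂ)
    (hm : ¬ ((s : ℤ) ∣ ∑ p, m p)) :
    ∑ j ∈ Finset.univ.filter (fun j : Fin k → Fin s => Function.Injective j),
      ∏ p, c p * Complex.exp (2 * Real.pi * Complex.I * m p * ((j p : ℕ) : ℂ) / s) = 0 := by
  have hs0 : 0 < s := hk1.trans hks
  haveI : NeZero s := ⟨hs0.ne'⟩
  have hsC : (s : ℂ) ≠ 0 := Nat.cast_ne_zero.mpr hs0.ne'
  set S := ∑ j ∈ Finset.univ.filter (fun j : Fin k → Fin s => Function.Injective j),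
      ∏ p, c p * Complex.exp (2 * Real.pi * Complex.I * m p * ((j p : ℕ) : ℂ) / s) with hS
  set w : ℂ := Complex.exp (2 * Real.pi * Complex.I * ((∑ p, m p : ℤ) : ℂ) / s) with hw
  have key : w * S = S := by
    rw [hS, Finset.mul_sum]
    refine Finset.sum_equiv
      (Equiv.piCongrRight fun _ : Fin k => Equiv.addRight (1 : Fin s)) ?_ ?_
    · intro j
      simp only [Finset.mem_filter, Finset.mem_univ, true_and, Equiv.piCongrRight,
        Equiv.addRight]
      constructor
      · intro h a b hab
        apply h
        simpa using congrArg (· + (1 : Fin s)) hab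
      · intro h a b hab
        apply h
        simpa using congrArg (· + (-1 : Fin s)) hab
    · intro j _
      have hval : ∀ p, (((Equiv.piCongrRight fun _ : Fin k =>
          Equiv.addRight (1 : Fin s)) j p : Fin s) : ℕ) = ((j p : ℕ) + 1) % s := by
        intro p
        simp only [Equiv.piCongrRight, Equiv.addRight, Equiv.coe_fn_mk]
        show ((j p + 1 : Fin s) : ℕ) = ((j p : ℕ) + 1) % s
        rw [Fin.val_add, Fin.val_one']
        conv_lhs => rw [Nat.add_mod]
        conv_rhs => rw [Nat.add_mod]
        rw [Nat.mod_mod_of_dvd 1 dvd_rfl]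
      calc w * ∏ p, c p * Complex.exp (2 * Real.pi * Complex.I * m p * ((j p : ℕ) : ℂ) / s)
          = ∏ p, c p * (Complex.exp (2 * Real.pi * Complex.I * m p / s) *
              Complex.exp (2 * Real.pi * Complex.I * m p * ((j p : ℕ) : ℂ) / s)) := by
            rw [hw]
            rw [show (2 * Real.pi * Complex.I * ((∑ p, m p : ℤ) : ℂ) / s)
                = ∑ p, 2 * Real.pi * Complex.I * (m p : ℂ) / s by
              push_cast; rw [Finset.mul_sum, Finset.sum_div]]
            rw [Complex.exp_sum]
            rw [Finset.prod_mul_distrib, Finset.prod_mul_distrib, Finset.prod_mul_distrib]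
            ring
        _ = ∏ p, c p * Complex.exp (2 * Real.pi * Complex.I * m p *
              ((((Equiv.piCongrRight fun _ : Fin k => Equiv.addRight (1 : Fin s)) j p
                : Fin s) : ℕ) : ℂ) / s) := by
            refine Finset.prod_congr rfl fun p _ => ?_
            rw [hval p, exp_period_aux s hsC]
  have hw1 : w ≠ 1 := by
    intro h
    rw [hw, Complex.exp_eq_one_iff] at h
    obtain ⟨n, hn⟩ := h
    have hπ : (2 * (Real.pi : ℂ) * Complex.I) ≠ 0 := by
      simp [Real.pi_ne_zero, Complex.I_ne_zero]
    have hM : ((∑ p, m p : ℤ) : ℂ) = (s : ℂ) * n := by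
      apply mul_left_cancel₀ hπ
      field_simp at hn
      push_cast at hn ⊢
      linear_combination (2 * (Real.pi : ℂ) * Complex.I) * hn
    have : (∑ p, m p) = (s : ℤ) * n := by exact_mod_cast hM
    exact hm ⟨n, this⟩
  have h0 : (w - 1) * S = 0 := by rw [sub_mul, one_mul, key, sub_self]
  rcases mul_eq_zero.mp h0 with h | h
  · exact absurd (sub_eq_zero.mp h) hw1
  · exact h
end

section
/- Let s be a positive integer, and for each j = 0,…,s-1 let X_j, Y_j : [0,2π] → ℝ be functions of the form X_j(t) = F((t+2πj)/s), Y_j(t) = G((t+2πj)/s) where F and G are real trigonometric polynomials of period 2π. Then for any a, b > 0 the function g(u,t) = ∏_{j=0}^{s-1}(u - aX_j(t) - i bY_j(t)) can be written as a finite Laurent polynomial in e^{it} with coefficients that are polynomials in u; that is, there exist complex coefficients d_{p,q} (finitely many nonzero, q ∈ ℤ) with g(u,t) = ∑_{p,q} d_{p,q} u^p e^{iqt} for all u ∈ ℂ and t ∈ [0,2π]. -/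
open Complex Finset

def TrigRep (s : ℕ) (f : ℂ → ℝ → ℂ) : Prop :=
  ∃ P : Finset (ℕ × ℤ), ∃ d : ℕ × ℤ → ℂ, ∀ u : ℂ, ∀ t : ℝ,
    f u t = ∑ pq ∈ P, d pq * u ^ pq.1 * Complex.exp (Complex.I * pq.2 * ((t : ℂ) / s))

theorem TrigRep.congr {s f g} (h : ∀ u t, f u t = g u t) (hg : TrigRep s g) : TrigRep s f := by
  obtain ⟨P, d, hP⟩ := hg
  exact ⟨P, d, fun u t => (h u t).trans (hP u t)⟩

theorem rep_zero (s : ℕ) : TrigRep s (fun _ _ => 0) := ⟨∅, fun _ => 0, by simp⟩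

theorem rep_one (s : ℕ) : TrigRep s (fun _ _ => 1) := by
  refine ⟨{(0, 0)}, fun _ => 1, fun u t => ?_⟩
  simp

theorem rep_u (s : ℕ) : TrigRep s (fun u _ => u) := by
  refine ⟨{(1, 0)}, fun _ => 1, fun u t => ?_⟩
  simp

theorem TrigRep.add {s : ℕ} {f g : ℂ → ℝ → ℂ} (hf : TrigRep s f) (hg : TrigRep s g) :
    TrigRep s (fun u t => f u t + g u t) := by
  classical
  obtain ⟨P₁, d₁, h₁⟩ := hf; obtain ⟨P₂, d₂, h₂⟩ := hg
  refine ⟨P₁ ∪ P₂,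
    fun pq => (if pq ∈ P₁ then d₁ pq else 0) + (if pq ∈ P₂ then d₂ pq else 0),
    fun u t => ?_⟩
  simp only [add_mul, Finset.sum_add_distrib, ite_mul, zero_mul]
  rw [h₁ u t, h₂ u t, Finset.sum_ite_mem, Finset.sum_ite_mem,
    Finset.union_inter_cancel_left, Finset.union_inter_cancel_right]

theorem TrigRep.mul {s : ℕ} {f g : ℂ → ℝ → ℂ} (hf : TrigRep s f) (hg : TrigRep s g) :
    TrigRep s (fun u t => f u t * g u t) := by
  classical
  obtain ⟨P₁, d₁, h₁⟩ := hf; obtain ⟨P₂, d₂, h₂⟩ := hg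
  refine ⟨(P₁ ×ˢ P₂).image (fun xy => xy.1 + xy.2),
    fun pq => ∑ xy ∈ (P₁ ×ˢ P₂).filter (fun xy => xy.1 + xy.2 = pq), d₁ xy.1 * d₂ xy.2,
    fun u t => ?_⟩
  simp only []
  rw [h₁ u t, h₂ u t, Finset.sum_mul_sum, ← Finset.sum_product']
  rw [← Finset.sum_fiberwise_of_maps_to (g := fun xy : (ℕ × ℤ) × (ℕ × ℤ) => xy.1 + xy.2)
    (fun x hx => Finset.mem_image_of_mem _ hx)]
  refine Finset.sum_congr rfl fun pq _ => ?_
  rw [Finset.sum_mul, Finset.sum_mul]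
  refine Finset.sum_congr rfl fun xy hxy => ?_
  have hsum : xy.1 + xy.2 = pq := (Finset.mem_filter.mp hxy).2
  have h1 : xy.1.1 + xy.2.1 = pq.1 := by rw [← hsum]; rfl
  have h2 : xy.1.2 + xy.2.2 = pq.2 := by rw [← hsum]; rfl
  rw [← h1, ← h2]
  rw [pow_add]
  have : Complex.exp (Complex.I * ((xy.1.2 + xy.2.2 : ℤ) : ℂ) * ((t : ℂ) / s))
      = Complex.exp (Complex.I * (xy.1.2 : ℂ) * ((t : ℂ) / s))
        * Complex.exp (Complex.I * (xy.2.2 : ℂ) * ((t : ℂ) / s)) := by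
    rw [← Complex.exp_add]; push_cast; ring_nf
  rw [this]; ring

theorem rep_sum {s : ℕ} {ι : Type*} (S : Finset ι) (f : ι → ℂ → ℝ → ℂ)
    (h : ∀ i ∈ S, TrigRep s (f i)) : TrigRep s (fun u t => ∑ i ∈ S, f i u t) := by
  classical
  induction S using Finset.induction_on with
  | empty => exact rep_zero s
  | @insert x T hx ih =>
    simp only [Finset.sum_insert hx]
    exact (h x (Finset.mem_insert_self x T)).add
      (ih fun i hi => h i (Finset.mem_insert_of_mem hi))

theorem rep_prod {s : ℕ} {ι : Type*} (S : Finset ι) (f : ι → ℂ → ℝ → ℂ)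
    (h : ∀ i ∈ S, TrigRep s (f i)) : TrigRep s (fun u t => ∏ i ∈ S, f i u t) := by
  classical
  induction S using Finset.induction_on with
  | empty => exact rep_one s
  | @insert x T hx ih =>
    simp only [Finset.prod_insert hx]
    exact (h x (Finset.mem_insert_self x T)).mul
      (ih fun i hi => h i (Finset.mem_insert_of_mem hi))

theorem rep_const (s : ℕ) (c : ℂ) : TrigRep s (fun _ _ => c) := by
  refine ⟨{(0, 0)}, fun _ => c, fun u t => ?_⟩
  simp

theorem rep_exp_shift (s : ℕ) (c : ℂ) (k : ℤ) (x : ℝ) :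
    TrigRep s (fun _ t => c * Complex.exp (Complex.I * (k : ℂ) * (((t + x) / s : ℝ) : ℂ))) := by
  refine ⟨{(0, k)}, fun _ => c * Complex.exp (Complex.I * (k : ℂ) * ((x : ℂ) / s)), fun u t => ?_⟩
  simp only [Finset.sum_singleton, pow_zero, mul_one]
  have : (Complex.I * (k : ℂ) * (((t + x) / s : ℝ) : ℂ))
      = Complex.I * (k : ℂ) * ((x : ℂ) / s) + Complex.I * (k : ℂ) * ((t : ℂ) / s) := by
    push_cast; ring
  rw [this, Complex.exp_add]; ring

theorem rep_factor (s : ℕ) (N M : ℕ) (a b : ℤ → ℂ) (F G : ℝ → ℝ)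
    (hF : ∀ t : ℝ, (F t : ℂ) =
      ∑ k ∈ Finset.Icc (-(N : ℤ)) (N : ℤ), a k * Complex.exp (Complex.I * k * t))
    (hG : ∀ t : ℝ, (G t : ℂ) =
      ∑ k ∈ Finset.Icc (-(M : ℤ)) (M : ℤ), b k * Complex.exp (Complex.I * k * t))
    (A B : ℝ) (j : ℕ) :
    TrigRep s (fun u t => u - (A : ℂ) * (F ((t + 2 * Real.pi * j) / s) : ℝ)
      - Complex.I * (B : ℂ) * (G ((t + 2 * Real.pi * j) / s) : ℝ)) := by
  have h1 : TrigRep s (fun _ t => (-(A : ℂ)) * ((F ((t + 2 * Real.pi * j) / s) : ℝ) : ℂ)) := by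
    refine TrigRep.congr (fun u t => ?_) (rep_sum (Finset.Icc (-(N:ℤ)) (N:ℤ))
      (fun k _ t => (-(A : ℂ) * a k) *
        Complex.exp (Complex.I * (k : ℂ) * (((t + 2 * Real.pi * j) / s : ℝ) : ℂ)))
      (fun k _ => rep_exp_shift s _ k _))
    rw [hF, Finset.mul_sum]
    exact Finset.sum_congr rfl fun k _ => by ring
  have h2 : TrigRep s (fun _ t =>
      (-(Complex.I * (B : ℂ))) * ((G ((t + 2 * Real.pi * j) / s) : ℝ) : ℂ)) := by
    refine TrigRep.congr (fun u t => ?_) (rep_sum (Finset.Icc (-(M:ℤ)) (M:ℤ))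
      (fun k _ t => (-(Complex.I * (B : ℂ)) * b k) *
        Complex.exp (Complex.I * (k : ℂ) * (((t + 2 * Real.pi * j) / s : ℝ) : ℂ)))
      (fun k _ => rep_exp_shift s _ k _))
    rw [hG, Finset.mul_sum]
    exact Finset.sum_congr rfl fun k _ => by ring
  refine TrigRep.congr (fun u t => ?_) ((rep_u s).add (h1.add h2))
  show _ = _ + (_ + _)
  ring

theorem F_periodic (N : ℕ) (a : ℤ → ℂ) (F : ℝ → ℝ)
    (hF : ∀ t : ℝ, (F t : ℂ) =
      ∑ k ∈ Finset.Icc (-(N : ℤ)) (N : ℤ), a k * Complex.exp (Complex.I * k * t)) :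
    ∀ x : ℝ, F (x + 2 * Real.pi) = F x := by
  intro x
  have : ((F (x + 2 * Real.pi) : ℝ) : ℂ) = ((F x : ℝ) : ℂ) := by
    rw [hF, hF]
    refine Finset.sum_congr rfl fun k _ => ?_
    have : Complex.I * (k : ℂ) * ((x + 2 * Real.pi : ℝ) : ℂ)
        = Complex.I * (k : ℂ) * (x : ℂ) + (k : ℂ) * (2 * (Real.pi : ℂ) * Complex.I) := by
      push_cast; ring
    rw [this, Complex.exp_add, Complex.exp_int_mul_two_pi_mul_I, mul_one]
  exact_mod_cast this

theorem prod_periodic (s : ℕ) (hs : 0 < s) (F G : ℝ → ℝ)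
    (hFper : ∀ x, F (x + 2 * Real.pi) = F x) (hGper : ∀ x, G (x + 2 * Real.pi) = G x)
    (A B : ℝ) (u : ℂ) (t : ℝ) :
    ∏ j ∈ Finset.range s,
        (u - (A : ℂ) * (F ((t + 2 * Real.pi + 2 * Real.pi * j) / s) : ℝ)
           - Complex.I * (B : ℂ) * (G ((t + 2 * Real.pi + 2 * Real.pi * j) / s) : ℝ))
      = ∏ j ∈ Finset.range s,
        (u - (A : ℂ) * (F ((t + 2 * Real.pi * j) / s) : ℝ)
           - Complex.I * (B : ℂ) * (G ((t + 2 * Real.pi * j) / s) : ℝ)) := by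
  obtain ⟨n, rfl⟩ : ∃ n, s = n + 1 := ⟨s - 1, (Nat.succ_pred_eq_of_pos hs).symm⟩
  set χ : ℕ → ℂ := fun j => u - (A : ℂ) * (F ((t + 2 * Real.pi * j) / (n+1 : ℕ)) : ℝ)
    - Complex.I * (B : ℂ) * (G ((t + 2 * Real.pi * j) / (n+1 : ℕ)) : ℝ) with hχ
  have harg : ∀ j : ℕ, (t + 2 * Real.pi + 2 * Real.pi * j) / ((n+1 : ℕ) : ℝ)
      = (t + 2 * Real.pi * ((j+1 : ℕ) : ℝ)) / ((n+1 : ℕ) : ℝ) := by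
    intro j; push_cast; ring
  have hlhs : ∏ j ∈ Finset.range (n+1),
      (u - (A : ℂ) * (F ((t + 2 * Real.pi + 2 * Real.pi * j) / (n+1 : ℕ)) : ℝ)
         - Complex.I * (B : ℂ) * (G ((t + 2 * Real.pi + 2 * Real.pi * j) / (n+1 : ℕ)) : ℝ))
      = ∏ j ∈ Finset.range (n+1), χ (j + 1) := by
    refine Finset.prod_congr rfl fun j _ => ?_
    rw [hχ]; simp only []
    rw [harg j]
  rw [hlhs, Finset.prod_range_succ]
  conv_rhs => rw [Finset.prod_range_succ']
  have hne : ((n : ℝ) + 1) ≠ 0 := by positivity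
  have hargN : (t + 2 * Real.pi * (((n+1) : ℕ) : ℝ)) / ((n+1 : ℕ) : ℝ)
      = t / ((n+1 : ℕ) : ℝ) + 2 * Real.pi := by
    push_cast; field_simp
  have harg0 : (t + 2 * Real.pi * ((0 : ℕ) : ℝ)) / ((n+1 : ℕ) : ℝ) = t / ((n+1 : ℕ) : ℝ) := by
    push_cast; ring
  have hend : χ (n + 1) = χ 0 := by
    rw [hχ]; simp only []
    rw [hargN, harg0, hFper, hGper]
  rw [hend, mul_comm]

theorem roots_sum (s : ℕ) (hs : 0 < s) (q : ℤ) :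
    ∑ r ∈ Finset.range s, Complex.exp (Complex.I * (q : ℂ) * (2 * (Real.pi : ℂ) / s)) ^ r
      = if (s : ℤ) ∣ q then (s : ℂ) else 0 := by
  have hs' : (s : ℂ) ≠ 0 := Nat.cast_ne_zero.mpr hs.ne'
  by_cases hdvd : (s : ℤ) ∣ q
  · obtain ⟨m, rfl⟩ := hdvd
    have hw : Complex.exp (Complex.I * (((s : ℤ) * m : ℤ) : ℂ) * (2 * (Real.pi : ℂ) / s)) = 1 := by
      have harg : Complex.I * (((s : ℤ) * m : ℤ) : ℂ) * (2 * (Real.pi : ℂ) / s)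
          = (m : ℂ) * (2 * (Real.pi : ℂ) * Complex.I) := by
        push_cast; field_simp
      rw [harg]
      exact Complex.exp_int_mul_two_pi_mul_I m
    push_cast at hw
    rw [if_pos ⟨m, rfl⟩]
    simp [hw]
  · have hw1 : Complex.exp (Complex.I * (q : ℂ) * (2 * (Real.pi : ℂ) / s)) ≠ 1 := by
      intro h
      rw [Complex.exp_eq_one_iff] at h
      obtain ⟨n, hn⟩ := h
      apply hdvd
      have hq : (q : ℂ) = (n : ℂ) * s := by
        have h2 : (2 * (Real.pi : ℂ) * Complex.I) ≠ 0 := by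
          simp [Real.pi_ne_zero, Complex.I_ne_zero, Complex.ofReal_ne_zero]
        apply mul_right_cancel₀ h2
        field_simp [hs'] at hn
        linear_combination (2 * (Real.pi : ℂ) * Complex.I) * hn
      exact ⟨n, by rw [mul_comm] at hq; exact_mod_cast hq⟩
    rw [geom_sum_eq hw1]
    have hws : Complex.exp (Complex.I * (q : ℂ) * (2 * (Real.pi : ℂ) / s)) ^ s = 1 := by
      rw [← Complex.exp_nat_mul]
      have harg : (s : ℂ) * (Complex.I * (q : ℂ) * (2 * (Real.pi : ℂ) / s))
          = (q : ℂ) * (2 * (Real.pi : ℂ) * Complex.I) := by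
        field_simp
      rw [harg]
      exact Complex.exp_int_mul_two_pi_mul_I q
    rw [hws]
    simp [hdvd]

theorem stmt2 (s : ℕ) (hs : 0 < s) (N M : ℕ) (a b : ℤ → ℂ)
    (ha : ∀ k, a (-k) = starRingEnd ℂ (a k)) (hb : ∀ k, b (-k) = starRingEnd ℂ (b k))
    (F G : ℝ → ℝ)
    (hF : ∀ t : ℝ, (F t : ℂ) =
      ∑ k ∈ Finset.Icc (-(N : ℤ)) (N : ℤ), a k * Complex.exp (Complex.I * k * t))
    (hG : ∀ t : ℝ, (G t : ℂ) =
      ∑ k ∈ Finset.Icc (-(M : ℤ)) (M : ℤ), b k * Complex.exp (Complex.I * k * t))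
    (A B : ℝ) (hA : 0 < A) (hB : 0 < B) :
    ∃ (P : Finset (ℕ × ℤ)) (d : ℕ × ℤ → ℂ),
      ∀ (u : ℂ) (t : ℝ), t ∈ Set.Icc (0 : ℝ) (2 * Real.pi) →
        ∏ j ∈ Finset.range s,
          (u - (A : ℂ) * F ((t + 2 * Real.pi * j) / s)
             - Complex.I * (B : ℂ) * G ((t + 2 * Real.pi * j) / s))
        = ∑ pq ∈ P, d pq * u ^ pq.1 * Complex.exp (Complex.I * pq.2 * t) := by
  classical
  have hs' : (s : ℂ) ≠ 0 := Nat.cast_ne_zero.mpr hs.ne'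
  have hsZ : (s : ℤ) ≠ 0 := by exact_mod_cast hs.ne'
  set f : ℂ → ℝ → ℂ := fun u t => ∏ j ∈ Finset.range s,
    (u - (A : ℂ) * F ((t + 2 * Real.pi * j) / s)
       - Complex.I * (B : ℂ) * G ((t + 2 * Real.pi * j) / s)) with hfdef
  obtain ⟨P, d, hPd⟩ : TrigRep s f :=
    rep_prod (Finset.range s) _ (fun j _ => rep_factor s N M a b F G hF hG A B j)
  have hper : ∀ u t, f u (t + 2 * Real.pi) = f u t := by
    intro u t
    rw [hfdef]
    simp only []
    exact prod_periodic s hs F G (F_periodic N a F hF) (F_periodic M b G hG) A B u t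
  have hshift : ∀ (u : ℂ) (r : ℕ) (t : ℝ), f u (t + 2 * Real.pi * r) = f u t := by
    intro u r
    induction r with
    | zero => simp
    | succ n ih =>
      intro t
      have harg : t + 2 * Real.pi * ((n+1 : ℕ) : ℝ) = (t + 2 * Real.pi * n) + 2 * Real.pi := by
        push_cast; ring
      rw [harg, hper, ih]
  have key : ∀ (u : ℂ) (t : ℝ), (s : ℂ) * f u t
      = ∑ pq ∈ P, d pq * (if (s : ℤ) ∣ pq.2 then (s : ℂ) else 0) * u ^ pq.1
          * Complex.exp (Complex.I * (pq.2 : ℂ) * ((t : ℂ) / s)) := by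
    intro u t
    have h1 : (s : ℂ) * f u t = ∑ r ∈ Finset.range s, f u (t + 2 * Real.pi * r) := by
      rw [Finset.sum_congr rfl fun r _ => hshift u r t]
      simp [Finset.sum_const, mul_comm]
    rw [h1]
    simp only [hPd]
    rw [Finset.sum_comm]
    refine Finset.sum_congr rfl fun pq _ => ?_
    rw [← roots_sum s hs pq.2]
    rw [Finset.mul_sum, Finset.sum_mul, Finset.sum_mul]
    refine Finset.sum_congr rfl fun r _ => ?_
    have harg : Complex.I * (pq.2 : ℂ) * (((t + 2 * Real.pi * r : ℝ) : ℂ) / s)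
        = Complex.I * (pq.2 : ℂ) * ((t : ℂ) / s)
          + (r : ℕ) * (Complex.I * (pq.2 : ℂ) * (2 * (Real.pi : ℂ) / s)) := by
      push_cast; ring
    rw [harg, Complex.exp_add, Complex.exp_nat_mul]
    ring
  refine ⟨(P.filter (fun pq => (s : ℤ) ∣ pq.2)).image (fun pq => (pq.1, pq.2 / s)),
    fun pm => d (pm.1, (s : ℤ) * pm.2), fun u t _ => ?_⟩
  have hfu : f u t = ∑ pq ∈ P.filter (fun pq => (s : ℤ) ∣ pq.2),
      d pq * u ^ pq.1 * Complex.exp (Complex.I * (pq.2 : ℂ) * ((t : ℂ) / s)) := by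
    apply mul_left_cancel₀ hs'
    rw [key u t, Finset.sum_filter, Finset.mul_sum]
    refine Finset.sum_congr rfl fun pq _ => ?_
    by_cases h : (s : ℤ) ∣ pq.2
    · rw [if_pos h, if_pos h]; ring
    · rw [if_neg h, if_neg h]; ring
  have hinj : ∀ x ∈ P.filter (fun pq => (s : ℤ) ∣ pq.2),
      ∀ y ∈ P.filter (fun pq => (s : ℤ) ∣ pq.2),
      (fun pq : ℕ × ℤ => (pq.1, pq.2 / s)) x = (fun pq : ℕ × ℤ => (pq.1, pq.2 / s)) y → x = y := by
    intro x hx y hy hxy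
    obtain ⟨mx, hmx⟩ := (Finset.mem_filter.mp hx).2
    obtain ⟨my, hmy⟩ := (Finset.mem_filter.mp hy).2
    have hxy' : (x.1, x.2 / (s : ℤ)) = (y.1, y.2 / (s : ℤ)) := hxy
    rw [Prod.mk.injEq] at hxy'
    obtain ⟨h1, h2⟩ := hxy'
    rw [hmx, hmy, Int.mul_ediv_cancel_left _ hsZ, Int.mul_ediv_cancel_left _ hsZ] at h2
    have : x.2 = y.2 := by rw [hmx, hmy, h2]
    exact Prod.ext h1 this
  show f u t = _
  rw [hfu, Finset.sum_image hinj]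
  refine Finset.sum_congr rfl fun pq hpq => ?_
  obtain ⟨m, hm⟩ := (Finset.mem_filter.mp hpq).2
  have hdiv : pq.2 / (s : ℤ) = m := by rw [hm, Int.mul_ediv_cancel_left _ hsZ]
  simp only [hdiv]
  have hd : d (pq.1, (s : ℤ) * m) = d pq := by rw [← hm]
  have hexp : Complex.I * ((m : ℤ) : ℂ) * (t : ℂ)
      = Complex.I * (pq.2 : ℂ) * ((t : ℂ) / s) := by
    rw [hm]; push_cast; field_simp
  rw [hd, ← hexp]
end

section
/- Let f : ℂ² → ℂ be a polynomial in u, v, conj(v), and apply the substitution u = (x²+y²+z²-1+2iz)/(x²+y²+z²+1), v = 2(x+iy)/(x²+y²+z²+1) (inverse stereographic projection). Then (x²+y²+z²+1)^{deg f} · f(u(x,y,z), v(x,y,z)) is a polynomial in x, y, z with complex coefficients, of degree at most 2·deg f, and its real zero set in ℝ³ equals the preimage under stereographic projection of f⁻¹(0) ∩ S³ (minus the point at infinity). -/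
set_option maxHeartbeats 1000000

/-- First coordinate of inverse stereographic projection, landing in S³ ⊂ ℂ². -/
noncomputable def uStereo (x y z : ℝ) : ℂ :=
  ((x : ℂ) ^ 2 + (y : ℂ) ^ 2 + (z : ℂ) ^ 2 - 1 + 2 * Complex.I * (z : ℂ)) /
    ((x : ℂ) ^ 2 + (y : ℂ) ^ 2 + (z : ℂ) ^ 2 + 1)

/-- Second coordinate of inverse stereographic projection. -/
noncomputable def vStereo (x y z : ℝ) : ℂ :=
  2 * ((x : ℂ) + Complex.I * (y : ℂ)) /
    ((x : ℂ) ^ 2 + (y : ℂ) ^ 2 + (z : ℂ) ^ 2 + 1)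

open MvPolynomial Complex

lemma denom_ne_zero (x y z : ℝ) :
    (x : ℂ) ^ 2 + (y : ℂ) ^ 2 + (z : ℂ) ^ 2 + 1 ≠ 0 := by
  have : ((x ^ 2 + y ^ 2 + z ^ 2 + 1 : ℝ) : ℂ) ≠ 0 := by
    rw [Complex.ofReal_ne_zero]; positivity
  simpa using this

lemma conj_vStereo (x y z : ℝ) :
    (starRingEnd ℂ) (vStereo x y z) =
      2 * ((x : ℂ) - Complex.I * (y : ℂ)) /
        ((x : ℂ) ^ 2 + (y : ℂ) ^ 2 + (z : ℂ) ^ 2 + 1) := by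
  rw [vStereo, map_div₀]
  congr 1
  · rw [map_mul, map_add, map_mul, Complex.conj_I, Complex.conj_ofReal, Complex.conj_ofReal,
      map_ofNat]
    ring
  · rw [map_add, map_add, map_add, map_pow, map_pow, map_pow,
      Complex.conj_ofReal, Complex.conj_ofReal, Complex.conj_ofReal, map_one]

lemma conj_uStereo (x y z : ℝ) :
    (starRingEnd ℂ) (uStereo x y z) =
      ((x : ℂ) ^ 2 + (y : ℂ) ^ 2 + (z : ℂ) ^ 2 - 1 - 2 * Complex.I * (z : ℂ)) /
        ((x : ℂ) ^ 2 + (y : ℂ) ^ 2 + (z : ℂ) ^ 2 + 1) := by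
  rw [uStereo, map_div₀]
  congr 1
  · rw [map_add, map_sub, map_add, map_add, map_pow, map_pow, map_pow, map_mul, map_mul,
      Complex.conj_I, Complex.conj_ofReal, Complex.conj_ofReal, Complex.conj_ofReal, map_one,
      map_ofNat]
    ring
  · rw [map_add, map_add, map_add, map_pow, map_pow, map_pow,
      Complex.conj_ofReal, Complex.conj_ofReal, Complex.conj_ofReal, map_one]

lemma sphere_id (x y z : ℝ) :
    ‖uStereo x y z‖ ^ 2 + ‖vStereo x y z‖ ^ 2 = 1 := by
  have hden := denom_ne_zero x y z
  have h1 : uStereo x y z * (starRingEnd ℂ) (uStereo x y z)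
      + vStereo x y z * (starRingEnd ℂ) (vStereo x y z) = 1 := by
    rw [conj_uStereo, conj_vStereo, uStereo, vStereo]
    field_simp
    linear_combination (-4*(y:ℂ)^2 - 4*(z:ℂ)^2) * Complex.I_sq
  have h2 : ((Complex.normSq (uStereo x y z) + Complex.normSq (vStereo x y z) : ℝ) : ℂ) = 1 := by
    push_cast [← Complex.mul_conj]
    exact h1
  rw [Complex.sq_norm, Complex.sq_norm]
  exact_mod_cast h2

lemma term_eq (den nA nB nBc cc : ℂ) (hden : den ≠ 0) (p q r d : ℕ) (h : p + q + r ≤ d) :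
    cc * nA ^ p * nB ^ q * nBc ^ r * den ^ (d - (p + q + r))
      = den ^ d * (cc * (nA / den) ^ p * (nB / den) ^ q * (nBc / den) ^ r) := by
  rw [div_pow, div_pow, div_pow]
  rw [show den ^ d = den ^ p * den ^ q * den ^ r * den ^ (d - (p + q + r)) by
    rw [← pow_add, ← pow_add, ← pow_add]; congr 1; omega]
  field_simp

theorem stmt18 (S : Finset (ℕ × ℕ × ℕ)) (c : ℕ × ℕ × ℕ → ℂ) (f : ℂ → ℂ → ℂ)
    (hf : ∀ u v : ℂ, f u v =
      ∑ x ∈ S, c x * u ^ x.1 * v ^ x.2.1 * (starRingEnd ℂ v) ^ x.2.2) :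
    ∃ Q : MvPolynomial (Fin 3) ℂ,
      Q.totalDegree ≤ 2 * (S.sup fun x => x.1 + x.2.1 + x.2.2) ∧
      ∀ x y z : ℝ,
        (MvPolynomial.eval ![(x : ℂ), (y : ℂ), (z : ℂ)] Q
          = ((x : ℂ) ^ 2 + (y : ℂ) ^ 2 + (z : ℂ) ^ 2 + 1)
              ^ (S.sup fun x => x.1 + x.2.1 + x.2.2)
            * f (uStereo x y z) (vStereo x y z)) ∧
        (‖uStereo x y z‖ ^ 2 + ‖vStereo x y z‖ ^ 2 = 1) ∧
        (MvPolynomial.eval ![(x : ℂ), (y : ℂ), (z : ℂ)] Q = 0 ↔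
          f (uStereo x y z) (vStereo x y z) = 0) := by
  classical
  set d := S.sup (fun x => x.1 + x.2.1 + x.2.2) with hd
  set pA : MvPolynomial (Fin 3) ℂ :=
    X 0 ^ 2 + X 1 ^ 2 + X 2 ^ 2 + C (-1) + C (2 * Complex.I) * X 2 with hpA
  set pB : MvPolynomial (Fin 3) ℂ := C 2 * (X 0 + C Complex.I * X 1) with hpB
  set pBc : MvPolynomial (Fin 3) ℂ := C 2 * (X 0 - C Complex.I * X 1) with hpBc
  set pD : MvPolynomial (Fin 3) ℂ := X 0 ^ 2 + X 1 ^ 2 + X 2 ^ 2 + 1 with hpD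
  have hA : pA.totalDegree ≤ 2 := by
    rw [hpA]
    refine (totalDegree_add _ _).trans (max_le ?_ ?_)
    · refine (totalDegree_add _ _).trans (max_le ?_ ?_)
      · refine (totalDegree_add _ _).trans (max_le ?_ ?_)
        · refine (totalDegree_add _ _).trans (max_le ?_ ?_)
          · exact (totalDegree_X_pow _ _).le
          · exact (totalDegree_X_pow _ _).le
        · exact (totalDegree_X_pow _ _).le
      · simp [totalDegree_C]
    · refine (totalDegree_mul _ _).trans ?_
      rw [totalDegree_C, totalDegree_X]
      norm_num
  have hB : pB.totalDegree ≤ 2 := by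
    rw [hpB]
    refine (totalDegree_mul _ _).trans ?_
    rw [totalDegree_C, zero_add]
    refine le_trans ((totalDegree_add _ _).trans (max_le ?_ ?_)) one_le_two
    · rw [totalDegree_X]
    · refine (totalDegree_mul _ _).trans ?_
      rw [totalDegree_C, totalDegree_X]
      norm_num
  have hBc : pBc.totalDegree ≤ 2 := by
    rw [hpBc, sub_eq_add_neg]
    refine (totalDegree_mul _ _).trans ?_
    rw [totalDegree_C, zero_add]
    refine le_trans ((totalDegree_add _ _).trans (max_le ?_ ?_)) one_le_two
    · rw [totalDegree_X]
    · rw [totalDegree_neg]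
      refine (totalDegree_mul _ _).trans ?_
      rw [totalDegree_C, totalDegree_X]
      norm_num
  have hD : pD.totalDegree ≤ 2 := by
    rw [hpD]
    refine (totalDegree_add _ _).trans (max_le ?_ ?_)
    · refine (totalDegree_add _ _).trans (max_le ?_ ?_)
      · refine (totalDegree_add _ _).trans (max_le ?_ ?_)
        · exact (totalDegree_X_pow _ _).le
        · exact (totalDegree_X_pow _ _).le
      · exact (totalDegree_X_pow _ _).le
    · simp [totalDegree_one]
  refine ⟨∑ t ∈ S, C (c t) * pA ^ t.1 * pB ^ t.2.1 * pBc ^ t.2.2 *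
      pD ^ (d - (t.1 + t.2.1 + t.2.2)), ?_, ?_⟩
  · refine (totalDegree_finset_sum _ _).trans (Finset.sup_le fun t ht => ?_)
    have hts : t.1 + t.2.1 + t.2.2 ≤ d := Finset.le_sup (f := fun x => x.1 + x.2.1 + x.2.2) ht
    calc (C (c t) * pA ^ t.1 * pB ^ t.2.1 * pBc ^ t.2.2 *
          pD ^ (d - (t.1 + t.2.1 + t.2.2))).totalDegree
        ≤ (C (c t) * pA ^ t.1 * pB ^ t.2.1 * pBc ^ t.2.2).totalDegree
            + (pD ^ (d - (t.1 + t.2.1 + t.2.2))).totalDegree := totalDegree_mul _ _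
      _ ≤ ((C (c t) * pA ^ t.1 * pB ^ t.2.1).totalDegree + (pBc ^ t.2.2).totalDegree)
            + (d - (t.1 + t.2.1 + t.2.2)) * pD.totalDegree :=
          add_le_add (totalDegree_mul _ _) (totalDegree_pow _ _)
      _ ≤ (((C (c t) * pA ^ t.1).totalDegree + (pB ^ t.2.1).totalDegree) + t.2.2 * pBc.totalDegree)
            + (d - (t.1 + t.2.1 + t.2.2)) * 2 :=
          add_le_add (add_le_add (totalDegree_mul _ _) (totalDegree_pow _ _))
            (Nat.mul_le_mul_left _ hD)
      _ ≤ (((0 + t.1 * pA.totalDegree) + t.2.1 * pB.totalDegree) + t.2.2 * 2)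
            + (d - (t.1 + t.2.1 + t.2.2)) * 2 := by
          refine add_le_add (add_le_add (add_le_add ?_ (totalDegree_pow _ _))
            (Nat.mul_le_mul_left _ hBc)) le_rfl
          refine (totalDegree_mul _ _).trans ?_
          rw [totalDegree_C, zero_add]
          exact Nat.zero_add _ ▸ (totalDegree_pow _ _)
      _ ≤ (((0 + t.1 * 2) + t.2.1 * 2) + t.2.2 * 2) + (d - (t.1 + t.2.1 + t.2.2)) * 2 :=
          add_le_add (add_le_add (add_le_add (add_le_add le_rfl
            (Nat.mul_le_mul_left _ hA)) (Nat.mul_le_mul_left _ hB)) le_rfl) le_rfl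
      _ ≤ 2 * d := by omega
  · intro x y z
    have hden := denom_ne_zero x y z
    have evA : MvPolynomial.eval ![(x : ℂ), (y : ℂ), (z : ℂ)] pA
        = (x : ℂ) ^ 2 + (y : ℂ) ^ 2 + (z : ℂ) ^ 2 - 1 + 2 * Complex.I * (z : ℂ) := by
      simp [hpA]; ring
    have evB : MvPolynomial.eval ![(x : ℂ), (y : ℂ), (z : ℂ)] pB
        = 2 * ((x : ℂ) + Complex.I * (y : ℂ)) := by
      simp [hpB]
    have evBc : MvPolynomial.eval ![(x : ℂ), (y : ℂ), (z : ℂ)] pBc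
        = 2 * ((x : ℂ) - Complex.I * (y : ℂ)) := by
      simp [hpBc]
    have evD : MvPolynomial.eval ![(x : ℂ), (y : ℂ), (z : ℂ)] pD
        = (x : ℂ) ^ 2 + (y : ℂ) ^ 2 + (z : ℂ) ^ 2 + 1 := by
      simp [hpD]
    have hmain : MvPolynomial.eval ![(x : ℂ), (y : ℂ), (z : ℂ)]
        (∑ t ∈ S, C (c t) * pA ^ t.1 * pB ^ t.2.1 * pBc ^ t.2.2 *
          pD ^ (d - (t.1 + t.2.1 + t.2.2)))
        = ((x : ℂ) ^ 2 + (y : ℂ) ^ 2 + (z : ℂ) ^ 2 + 1) ^ d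
            * f (uStereo x y z) (vStereo x y z) := by
      rw [hf, Finset.mul_sum, map_sum]
      refine Finset.sum_congr rfl fun t ht => ?_
      have hts : t.1 + t.2.1 + t.2.2 ≤ d := Finset.le_sup (f := fun x => x.1 + x.2.1 + x.2.2) ht
      rw [map_mul, map_mul, map_mul, map_mul, map_pow, map_pow, map_pow, map_pow, eval_C,
        evA, evB, evBc, evD, conj_vStereo, uStereo, vStereo]
      exact term_eq _ _ _ _ _ hden _ _ _ _ hts
    refine ⟨hmain, sphere_id x y z, ?_⟩
    rw [hmain, mul_eq_zero]
    constructor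
    · rintro (h | h)
      · exact absurd h (pow_ne_zero _ hden)
      · exact h
    · exact fun h => Or.inr h
end
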